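/- Assume Ω¹_{R̃/W₂(k)} is flat as a W₂(k)-module. Let B be a free R̃-module, d̃: B → B an R̃-linear map, A = B/pB, d = d̃ mod p, and let ∇₀ be a connection on A relative to k; set κ = ∇₀∘d − (d ⊗ id)∘∇₀: A → A ⊗_R Ω¹_{R/k} (an R-linear map). Let ∇̃ be the Frobenius-pullback connection on F̃*B determined by ∇₀, and let F̃*d̃ = id_{R̃} ⊗ d̃: F̃*B → F̃*B. Then: (i) the commutator Θ = ∇̃∘(F̃*d̃) − ((F̃*d̃) ⊗ id)∘∇̃ takes values in p·(F̃*B ⊗_{R̃} Ω¹_{R̃/W₂(k)}); (ii) the assignment a ⊗ η ↦ (1 ⊗ a) ⊗ C⁻¹_{(R̃,F̃)}(η) gives a well-defined additive map A ⊗_R Ω¹_{R/k} → F*A ⊗_R Ω¹_{R/k}, and there is a unique R-linear map C⁻¹(κ): F*A → F*A ⊗_R Ω¹_{R/k} sending 1 ⊗ x to the image of κ(x) under this map; (iii) the map F*A → F*A ⊗_R Ω¹_{R/k} obtained from Θ by dividing by p and reducing modulo p equals C⁻¹(κ). (That is, [∇̃, F̃*d̃]/p = C⁻¹_{(R̃,F̃)}(κ).)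 -/

import Mathlib

/-!
Statement 10: (Setting of Statements 8 and 9.)  Let `B` be a free `R̃`-module with an
`R̃`-linear map `d̃ : B → B`, `A = B/pB`, `d = d̃ mod p`, `∇₀` a connection on `A` relative
to `k`, and `κ = ∇₀∘d − (d ⊗ id)∘∇₀` the Kodaira–Spencer map.  Let `∇̃` be the
Frobenius-pullback connection on `F̃^*B` determined by `∇₀` and `F̃^*d̃ = id ⊗ d̃`.  Then:
(i) the commutator `Θ = ∇̃∘(F̃^*d̃) − ((F̃^*d̃) ⊗ id)∘∇̃` takes values in `p·(F̃^*B ⊗ Ω¹)`;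
(ii) `a ⊗ η ↦ (1 ⊗ a) ⊗ C⁻¹(η)` gives a well-defined additive map
`A ⊗ Ω¹_{R/k} → F^*A ⊗ Ω¹_{R/k}` and there is a unique `R`-linear
`C⁻¹(κ) : F^*A → F^*A ⊗ Ω¹_{R/k}` with `1 ⊗ x ↦` the image of `κ(x)`;
(iii) `[∇̃, F̃^*d̃]/p` modulo `p` equals `C⁻¹(κ)`.

As licensed by the context, we use the identifications `Ω¹_{R/k} = Ω¹_{R̃/W₂}/p`,
`A = B/pB`, `F^*A = (F̃^*A)/p`, and express "divide by `p` and reduce mod `p`" by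
quantifying over elements `t` with `Θ(ξ) = p·t`.  The canonical maps `F̃^*` (pullback of
forms), `C⁻¹` (inverse Cartier operator, Statement 9), `∇̃` (Statement 8), `F̃^*d̃`, and the
reduction `F̃^*B ⊗ Ω¹ → F^*A ⊗ Ω¹_{R/k}` are each taken as hypotheses characterized
uniquely by their stated defining properties.
-/

open scoped TensorProduct

set_option synthInstance.maxHeartbeats 1000000
set_option maxHeartbeats 1000000

universe u

/-- A copy of the ring `R`, serving as the source of the ring endomorphism `f : R → R`. -/
def TwistSrc {R : Type u} [CommRing R] (f : R →+* R) : Type u := R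

instance {R : Type u} [CommRing R] (f : R →+* R) : CommRing (TwistSrc f) :=
  inferInstanceAs (CommRing R)

/-- `R` is an algebra over its copy `TwistSrc f` via `f`. -/
instance {R : Type u} [CommRing R] (f : R →+* R) : Algebra (TwistSrc f) R :=
  (show TwistSrc f →+* R from f).toAlgebra

instance (priority := 100) {R : Type u} [CommRing R] (f : R →+* R) (V : Type*)
    [AddCommGroup V] [Module R V] : Module (TwistSrc f) V :=
  inferInstanceAs (Module R V)

/-- The base change `R ⊗_{f,R} V` of an `R`-module `V` along the ring endomorphism
`f : R → R`; it is an `R`-module via the left tensor factor. -/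
abbrev Twist {R : Type u} [CommRing R] (f : R →+* R) (V : Type*) [AddCommGroup V]
    [Module R V] : Type _ :=
  TensorProduct (TwistSrc f) R V

-- ===== auxiliary lemmas =====

lemma witt_p_exact (p : ℕ) [Fact p.Prime] (k : Type u) [Field k] [CharP k p] [PerfectRing k p]
    (y : TruncatedWittVector p 2 k) (hy : (p : TruncatedWittVector p 2 k) * y = 0) :
    ∃ x : TruncatedWittVector p 2 k, (p : TruncatedWittVector p 2 k) * x = y := by
  obtain ⟨Y, rfl⟩ := WittVector.truncate_surjective p 2 k y
  have hmul : ∀ Z : WittVector p k,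
      (p : TruncatedWittVector p 2 k) * WittVector.truncate 2 Z =
        WittVector.truncate 2 (WittVector.verschiebung (WittVector.frobenius Z)) := by
    intro Z
    rw [WittVector.verschiebung_frobenius]
    push_cast [← map_mul, ← map_natCast (WittVector.truncate (p := p) 2 (R := k))]
    ring_nf
  have hy0 : Y.coeff 0 = 0 := by
    rw [hmul] at hy
    have h1 := congrArg (fun z => TruncatedWittVector.coeff (1 : Fin 2) z) hy
    simp only [WittVector.coeff_truncate, TruncatedWittVector.coeff_zero] at h1
    rw [show ((1 : Fin 2) : ℕ) = 0 + 1 from rfl, WittVector.verschiebung_coeff_succ,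
      WittVector.coeff_frobenius_charP] at h1
    exact pow_eq_zero_iff (Fact.out (p := p.Prime)).ne_zero |>.mp h1
  set r : k := (frobeniusEquiv k p).symm (Y.coeff 1) with hr
  set X : WittVector p k := WittVector.mk p (fun n => if n = 0 then r else 0) with hX
  refine ⟨WittVector.truncate 2 X, ?_⟩
  rw [hmul]
  apply TruncatedWittVector.ext
  intro i
  simp only [WittVector.coeff_truncate]
  fin_cases i
  · simp [WittVector.verschiebung_coeff_zero, hy0]
  · show (WittVector.verschiebung (WittVector.frobenius X)).coeff (0+1) = Y.coeff 1
    rw [WittVector.verschiebung_coeff_succ, WittVector.coeff_frobenius_charP]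
    show ((X.coeff 0)) ^ p = _
    simp [hX, hr, WittVector.coeff_mk]

lemma witt_p_sq (p : ℕ) [Fact p.Prime] (k : Type u) [Field k] [CharP k p] :
    (p : TruncatedWittVector p 2 k) * (p : TruncatedWittVector p 2 k) = 0 := by
  have : (p : TruncatedWittVector p 2 k) * (p : TruncatedWittVector p 2 k) =
      WittVector.truncate 2 ((p : WittVector p k) ^ 2) := by
    rw [map_pow, map_natCast]; ring
  rw [this]
  apply TruncatedWittVector.ext
  intro i
  rw [WittVector.coeff_truncate, TruncatedWittVector.coeff_zero]
  exact WittVector.coeff_p_pow_eq_zero p k (by omega)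

lemma flat_p_div {W : Type*} [CommRing W] (q : W)
    (hW : ∀ y : W, q * y = 0 → ∃ x, q * x = y) (hq2 : q * q = 0)
    (M : Type u) [AddCommGroup M] [Module W M] [Module.Flat W M]
    (m : M) (hm : q • m = 0) : ∃ v, m = q • v := by
  set f : W →ₗ[W] W := q • LinearMap.id with hf
  have hex : Function.Exact f f := by
    intro y
    constructor
    · intro hy
      obtain ⟨x, hx⟩ := hW y hy
      exact ⟨x, hx⟩
    · rintro ⟨x, rfl⟩
      show q • (q • x) = 0
      simp only [smul_eq_mul, ← mul_assoc, hq2, zero_mul]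
  have hflat := Module.Flat.lTensor_exact (R := W) M hex
  have hlt : ∀ ξ : M ⊗[W] W, f.lTensor M ξ = q • ξ := by
    intro ξ
    induction ξ using TensorProduct.induction_on with
    | zero => simp
    | tmul a b =>
        simp only [LinearMap.lTensor_tmul, hf, LinearMap.smul_apply, LinearMap.id_coe, id_eq,
          TensorProduct.tmul_smul]
    | add a b ha hb => simp [map_add, ha, hb, smul_add]
  have h0 : f.lTensor M (m ⊗ₜ[W] 1) = 0 := by
    rw [hlt, TensorProduct.smul_tmul', hm, TensorProduct.zero_tmul]
  obtain ⟨ξ, hξ⟩ := (hflat (m ⊗ₜ[W] 1)).mp h0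
  refine ⟨TensorProduct.rid W M ξ, ?_⟩
  have := congrArg (TensorProduct.rid W M) hξ
  rw [hlt, map_smul] at this
  simpa using this.symm

lemma p_div_finsupp {N : Type*} [AddCommGroup N] (n : ℕ) {ι : Type*}
    (hN : ∀ m : N, n • m = 0 → ∃ v, m = n • v)
    (f : ι →₀ N) (hf : n • f = 0) : ∃ g, f = n • g := by
  have hc : ∀ i, ∃ v, f i = n • v := by
    intro i
    apply hN
    have := congrArg (fun z => z i) hf
    simpa using this
  choose v hv using hc
  refine ⟨f.support.sum (fun i => Finsupp.single i (v i)), ?_⟩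
  rw [Finset.smul_sum]
  simp only [Finsupp.smul_single, ← hv]
  exact (Finsupp.sum_single f).symm

lemma p_div_equiv {M M' : Type*} [AddCommGroup M] [AddCommGroup M'] (n : ℕ)
    (e : M ≃+ M') (hM' : ∀ m : M', n • m = 0 → ∃ v, m = n • v)
    (m : M) (hm : n • m = 0) : ∃ v, m = n • v := by
  obtain ⟨v, hv⟩ := hM' (e m) (by rw [← map_nsmul, hm, map_zero])
  refine ⟨e.symm v, ?_⟩
  apply e.injective
  rw [hv, map_nsmul, AddEquiv.apply_symm_apply]

lemma tw_smul_right {R : Type u} [CommRing R] (f : R →+* R) {V : Type*} [AddCommGroup V]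
    [Module R V] (r s : R) (a : V) :
    s ⊗ₜ[TwistSrc f] (r • a) = (f r * s) ⊗ₜ[TwistSrc f] a := by
  have h1 : r • a = (show TwistSrc f from r) • a := rfl
  rw [h1, ← TensorProduct.smul_tmul]
  congr 1

lemma tw_smul_left {R : Type u} [CommRing R] (f : R →+* R) {V : Type*} [AddCommGroup V]
    [Module R V] (r s : R) (a : V) :
    r • (s ⊗ₜ[TwistSrc f] a : Twist f V) = (r * s) ⊗ₜ[TwistSrc f] a := by
  rw [TensorProduct.smul_tmul']
  rfl

theorem p_curvature_formula_for_frobenius_pullback_connection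
    (p : ℕ) [Fact p.Prime]
    (k : Type u) [Field k] [CharP k p] [PerfectRing k p]
    (Rt : Type u) [CommRing Rt] [Algebra (TruncatedWittVector p 2 k) Rt]
    (hRflat : Module.Flat (TruncatedWittVector p 2 k) Rt)
    -- `Ω¹_{R̃/W₂(k)}` is flat over `W₂(k)`:
    (hΩflat : Module.Flat (TruncatedWittVector p 2 k)
      (KaehlerDifferential (TruncatedWittVector p 2 k) Rt))
    -- a free `R̃`-module `B` with an `R̃`-linear map `d̃`:
    (B : Type u) [AddCommGroup B] [Module Rt B] [Module.Free Rt B]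
    (dt : B →ₗ[Rt] B)
    -- a Frobenius lift `F̃`:
    (Ft : Rt →+* Rt) (hFt : ∀ x : Rt, Ft x - x ^ p ∈ Ideal.span {(p : Rt)})
    -- the pullback `F̃^*` of 1-forms, `a·db ↦ F̃(a)·d(F̃ b)`:
    (Φ : KaehlerDifferential (TruncatedWittVector p 2 k) Rt →+
      KaehlerDifferential (TruncatedWittVector p 2 k) Rt)
    (hΦ : ∀ a b : Rt,
      Φ (a • KaehlerDifferential.D (TruncatedWittVector p 2 k) Rt b) =
        Ft a • KaehlerDifferential.D (TruncatedWittVector p 2 k) Rt (Ft b))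
    -- the induced map `H : B ⊗ Ω¹ → F̃^*B ⊗ Ω¹`, `b ⊗ ω ↦ (1 ⊗ b) ⊗ F̃^*ω`:
    (H : TensorProduct Rt B (KaehlerDifferential (TruncatedWittVector p 2 k) Rt) →+
      TensorProduct Rt (Twist Ft B) (KaehlerDifferential (TruncatedWittVector p 2 k) Rt))
    (hH : ∀ (b : B) (ω : KaehlerDifferential (TruncatedWittVector p 2 k) Rt),
      H (b ⊗ₜ ω) = (((1 : Rt) ⊗ₜ[TwistSrc Ft] b : Twist Ft B)) ⊗ₜ[Rt] Φ ω)
    -- `F̃^*d̃ = id ⊗ d̃ : F̃^*B → F̃^*B`: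
    (Ftd : Twist Ft B →ₗ[Rt] Twist Ft B)
    (hFtd : ∀ (f : Rt) (x : B), Ftd (f ⊗ₜ[TwistSrc Ft] x) = f ⊗ₜ[TwistSrc Ft] (dt x)) :
    -- `pB`, `A = B/pB`, `p·Ω¹`, `Ω¹_{R/k} = Ω¹/pΩ¹`, the reduction maps, `d = d̃ mod p`:
    let pB : Submodule Rt B := LinearMap.range ((p : Rt) • (LinearMap.id : B →ₗ[Rt] B))
    let pΩ : Submodule Rt (KaehlerDifferential (TruncatedWittVector p 2 k) Rt) :=
      LinearMap.range ((p : Rt) • (LinearMap.id :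
        KaehlerDifferential (TruncatedWittVector p 2 k) Rt →ₗ[Rt]
          KaehlerDifferential (TruncatedWittVector p 2 k) Rt))
    let κB := pB.mkQ
    let κΩ := pΩ.mkQ
    let dA : (B ⧸ pB) →ₗ[Rt] (B ⧸ pB) :=
      Submodule.mapQ pB pB dt (by rintro x ⟨y, rfl⟩; exact ⟨dt y, by simp⟩)
    -- `F^*A = (F̃^*A)/p` and its reduction map:
    let pFA : Submodule Rt (Twist Ft (B ⧸ pB)) :=
      LinearMap.range ((p : Rt) • (LinearMap.id :
        Twist Ft (B ⧸ pB) →ₗ[Rt] Twist Ft (B ⧸ pB)))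
    -- a connection `∇₀` on `A` relative to `k`:
    ∀ Dconn : (B ⧸ pB) →+
        TensorProduct Rt (B ⧸ pB) (KaehlerDifferential (TruncatedWittVector p 2 k) Rt ⧸ pΩ),
      (∀ (f : Rt) (m : B ⧸ pB),
        Dconn (f • m) =
          m ⊗ₜ[Rt] (κΩ (KaehlerDifferential.D (TruncatedWittVector p 2 k) Rt f)) +
            f • Dconn m) →
    -- an additive lift `∇′₀` of `∇₀`:
    ∀ L0 : B →+ TensorProduct Rt B (KaehlerDifferential (TruncatedWittVector p 2 k) Rt),
      (∀ x : B, TensorProduct.map κB κΩ (L0 x) = Dconn (κB x)) →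
    -- the Frobenius-pullback connection `∇̃` on `F̃^*B` determined by `∇₀` (Statement 8):
    ∀ nt : Twist Ft B →+
        TensorProduct Rt (Twist Ft B) (KaehlerDifferential (TruncatedWittVector p 2 k) Rt),
      (∀ (f : Rt) (x : B),
        nt (f ⊗ₜ[TwistSrc Ft] x) =
          (((1 : Rt) ⊗ₜ[TwistSrc Ft] x : Twist Ft B)) ⊗ₜ[Rt]
            (KaehlerDifferential.D (TruncatedWittVector p 2 k) Rt f) + f • H (L0 x)) →
    -- the inverse Cartier operator `C⁻¹` (Statement 9):
    ∀ c : (KaehlerDifferential (TruncatedWittVector p 2 k) Rt ⧸ pΩ) →+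
        (KaehlerDifferential (TruncatedWittVector p 2 k) Rt ⧸ pΩ),
      (∀ η ω : KaehlerDifferential (TruncatedWittVector p 2 k) Rt,
        Φ η = (p : Rt) • ω → c (κΩ η) = κΩ ω) →
    -- the reduction map `F̃^*B ⊗ Ω¹_{R̃/W₂} → F^*A ⊗ Ω¹_{R/k}`:
    ∀ ρ : TensorProduct Rt (Twist Ft B)
          (KaehlerDifferential (TruncatedWittVector p 2 k) Rt) →+
        TensorProduct Rt (Twist Ft (B ⧸ pB) ⧸ pFA)
          (KaehlerDifferential (TruncatedWittVector p 2 k) Rt ⧸ pΩ),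
      (∀ (f : Rt) (x : B) (ω : KaehlerDifferential (TruncatedWittVector p 2 k) Rt),
        ρ ((f ⊗ₜ[TwistSrc Ft] x) ⊗ₜ[Rt] ω) =
          (pFA.mkQ (f ⊗ₜ[TwistSrc Ft] (κB x))) ⊗ₜ[Rt] (κΩ ω)) →
    -- the Kodaira–Spencer map `κ = ∇₀∘d − (d ⊗ id)∘∇₀` and the commutator
    -- `Θ = ∇̃∘(F̃^*d̃) − ((F̃^*d̃) ⊗ id)∘∇̃`:
    let ks : (B ⧸ pB) →+
        TensorProduct Rt (B ⧸ pB)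
          (KaehlerDifferential (TruncatedWittVector p 2 k) Rt ⧸ pΩ) :=
      Dconn.comp dA.toAddMonoidHom -
        (TensorProduct.map dA (LinearMap.id)).toAddMonoidHom.comp Dconn
    let Θ : Twist Ft B →+
        TensorProduct Rt (Twist Ft B)
          (KaehlerDifferential (TruncatedWittVector p 2 k) Rt) :=
      letI : AddCommGroup (Twist Ft B →+
          TensorProduct Rt (Twist Ft B)
            (KaehlerDifferential (TruncatedWittVector p 2 k) Rt)) :=
        @AddMonoidHom.instAddCommGroup _ _ _ TensorProduct.addCommGroup
      nt.comp Ftd.toAddMonoidHom -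
        (TensorProduct.map Ftd (LinearMap.id)).toAddMonoidHom.comp nt
    -- (i) `Θ` takes values in `p·(F̃^*B ⊗ Ω¹)`:
    (∀ z : Twist Ft B,
      Θ z ∈ LinearMap.range ((p : Rt) • (LinearMap.id :
        TensorProduct Rt (Twist Ft B)
            (KaehlerDifferential (TruncatedWittVector p 2 k) Rt) →ₗ[Rt]
          TensorProduct Rt (Twist Ft B)
            (KaehlerDifferential (TruncatedWittVector p 2 k) Rt)))) ∧
    -- (ii) `a ⊗ η ↦ (1 ⊗ a) ⊗ C⁻¹(η)` is a well-defined additive map, and there is a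
    -- unique linear `C⁻¹(κ) : F^*A → F^*A ⊗ Ω¹_{R/k}` with `1 ⊗ x ↦ G (κ x)`:
    ((∃! G : TensorProduct Rt (B ⧸ pB)
          (KaehlerDifferential (TruncatedWittVector p 2 k) Rt ⧸ pΩ) →+
        TensorProduct Rt (Twist Ft (B ⧸ pB) ⧸ pFA)
          (KaehlerDifferential (TruncatedWittVector p 2 k) Rt ⧸ pΩ),
      ∀ (a : B ⧸ pB) (η : KaehlerDifferential (TruncatedWittVector p 2 k) Rt ⧸ pΩ),
        G (a ⊗ₜ[Rt] η) =
          (pFA.mkQ ((1 : Rt) ⊗ₜ[TwistSrc Ft] a)) ⊗ₜ[Rt] (c η)) ∧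
     (∀ G : TensorProduct Rt (B ⧸ pB)
          (KaehlerDifferential (TruncatedWittVector p 2 k) Rt ⧸ pΩ) →+
        TensorProduct Rt (Twist Ft (B ⧸ pB) ⧸ pFA)
          (KaehlerDifferential (TruncatedWittVector p 2 k) Rt ⧸ pΩ),
      (∀ (a : B ⧸ pB) (η : KaehlerDifferential (TruncatedWittVector p 2 k) Rt ⧸ pΩ),
        G (a ⊗ₜ[Rt] η) =
          (pFA.mkQ ((1 : Rt) ⊗ₜ[TwistSrc Ft] a)) ⊗ₜ[Rt] (c η)) →
      ∃! CK : (Twist Ft (B ⧸ pB) ⧸ pFA) →ₗ[Rt]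
          TensorProduct Rt (Twist Ft (B ⧸ pB) ⧸ pFA)
            (KaehlerDifferential (TruncatedWittVector p 2 k) Rt ⧸ pΩ),
        ∀ x : B ⧸ pB,
          CK (pFA.mkQ ((1 : Rt) ⊗ₜ[TwistSrc Ft] x)) = G (ks x))) ∧
    -- (iii) `[∇̃, F̃^*d̃]/p` reduced modulo `p` equals `C⁻¹(κ)`:
    (∀ G : TensorProduct Rt (B ⧸ pB)
          (KaehlerDifferential (TruncatedWittVector p 2 k) Rt ⧸ pΩ) →+
        TensorProduct Rt (Twist Ft (B ⧸ pB) ⧸ pFA)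
          (KaehlerDifferential (TruncatedWittVector p 2 k) Rt ⧸ pΩ),
      (∀ (a : B ⧸ pB) (η : KaehlerDifferential (TruncatedWittVector p 2 k) Rt ⧸ pΩ),
        G (a ⊗ₜ[Rt] η) =
          (pFA.mkQ ((1 : Rt) ⊗ₜ[TwistSrc Ft] a)) ⊗ₜ[Rt] (c η)) →
      ∀ CK : (Twist Ft (B ⧸ pB) ⧸ pFA) →ₗ[Rt]
          TensorProduct Rt (Twist Ft (B ⧸ pB) ⧸ pFA)
            (KaehlerDifferential (TruncatedWittVector p 2 k) Rt ⧸ pΩ),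
        (∀ x : B ⧸ pB,
          CK (pFA.mkQ ((1 : Rt) ⊗ₜ[TwistSrc Ft] x)) = G (ks x)) →
        ∀ (f : Rt) (x : B)
          (t : TensorProduct Rt (Twist Ft B)
            (KaehlerDifferential (TruncatedWittVector p 2 k) Rt)),
          Θ (f ⊗ₜ[TwistSrc Ft] x) = (p : Rt) • t →
            ρ t = CK (pFA.mkQ (f ⊗ₜ[TwistSrc Ft] (κB x)))) := by
  classical
  intro pB pΩ κB κΩ dA pFA Dconn hDconn L0 hL0 nt hnt c hc ρ hρ ks Θ
  -- Frobenius pullback of forms is semilinear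
  have hΦsemi : ∀ (η : KaehlerDifferential (TruncatedWittVector p 2 k) Rt) (r : Rt),
      Φ (r • η) = Ft r • Φ η := by
    intro η
    have hmem : η ∈ Submodule.span Rt
        (Set.range (KaehlerDifferential.D (TruncatedWittVector p 2 k) Rt)) := by
      rw [KaehlerDifferential.span_range_derivation]; trivial
    induction hmem using Submodule.span_induction with
    | mem x hx =>
        obtain ⟨b, rfl⟩ := hx
        intro r
        have h1 : Φ (KaehlerDifferential.D (TruncatedWittVector p 2 k) Rt b) =
            KaehlerDifferential.D (TruncatedWittVector p 2 k) Rt (Ft b) := by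
          have := hΦ 1 b
          simpa using this
        rw [hΦ r b, h1]
    | zero => intro r; simp
    | add x y hx hy ihx ihy => intro r; rw [smul_add, map_add, map_add, ihx, ihy, smul_add]
    | smul a x hx ih =>
        intro r
        rw [smul_smul, ih (r * a), map_mul, mul_smul, ih a]
  -- Frobenius pullback of forms is divisible by p
  have hΦdiv : ∀ η : KaehlerDifferential (TruncatedWittVector p 2 k) Rt,
      ∃ ω, Φ η = (p : Rt) • ω := by
    intro η
    have hmem : η ∈ Submodule.span Rt
        (Set.range (KaehlerDifferential.D (TruncatedWittVector p 2 k) Rt)) := by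
      rw [KaehlerDifferential.span_range_derivation]; trivial
    induction hmem using Submodule.span_induction with
    | mem x hx =>
        obtain ⟨b, rfl⟩ := hx
        obtain ⟨m, hm⟩ := Ideal.mem_span_singleton.mp (hFt b)
        have hFtb : Ft b = b ^ p + (p : Rt) * m := by
          rw [← hm]; ring
        have h1 : Φ (KaehlerDifferential.D (TruncatedWittVector p 2 k) Rt b) =
            KaehlerDifferential.D (TruncatedWittVector p 2 k) Rt (Ft b) := by
          have := hΦ 1 b
          simpa using this
        have hD : KaehlerDifferential.D (TruncatedWittVector p 2 k) Rt (Ft b)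
            = (p : Rt) • (b ^ (p - 1) • KaehlerDifferential.D (TruncatedWittVector p 2 k) Rt b
                + KaehlerDifferential.D (TruncatedWittVector p 2 k) Rt m) := by
          rw [hFtb, map_add, Derivation.leibniz, Derivation.map_natCast, smul_zero, add_zero,
            Derivation.leibniz_pow, smul_add, ← Nat.cast_smul_eq_nsmul Rt]
        exact ⟨_, by rw [h1, hD]⟩
    | zero => exact ⟨0, by simp⟩
    | add x y hx hy ihx ihy =>
        obtain ⟨u, hu⟩ := ihx; obtain ⟨v, hv⟩ := ihy
        exact ⟨u + v, by rw [map_add, hu, hv, smul_add]⟩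
    | smul a x hx ih =>
        obtain ⟨u, hu⟩ := ih
        exact ⟨Ft a • u, by rw [hΦsemi, hu, smul_comm]⟩
  -- semilinearity of the inverse Cartier operator
  have hcsemi : ∀ (r : Rt) (ηq : KaehlerDifferential (TruncatedWittVector p 2 k) Rt ⧸ pΩ),
      c (r • ηq) = Ft r • c ηq := by
    intro r ηq
    obtain ⟨η, rfl⟩ := Submodule.mkQ_surjective pΩ ηq
    obtain ⟨ω, hω⟩ := hΦdiv η
    have h1 : c (κΩ η) = κΩ ω := hc η ω hω
    have h2 : Φ (r • η) = (p : Rt) • (Ft r • ω) := by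
      rw [hΦsemi, hω, smul_comm]
    have h3 : c (κΩ (r • η)) = κΩ (Ft r • ω) := hc _ _ h2
    have h4 : κΩ (r • η) = r • κΩ η := map_smul κΩ r η
    rw [← h4, h3, map_smul, h1]
  -- torsion of the reduced modules
  have hT2tor : ∀ t : TensorProduct Rt (Twist Ft (B ⧸ pB) ⧸ pFA)
      (KaehlerDifferential (TruncatedWittVector p 2 k) Rt ⧸ pΩ), (p : Rt) • t = 0 := by
    intro t
    induction t using TensorProduct.induction_on with
    | zero => simp
    | tmul u v =>
        obtain ⟨w, rfl⟩ := Submodule.mkQ_surjective pFA u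
        rw [TensorProduct.smul_tmul', ← map_smul]
        have : (p : Rt) • w ∈ pFA := ⟨w, by simp⟩
        have hz : pFA.mkQ ((p : Rt) • w) = 0 := by
          rw [Submodule.mkQ_apply]
          exact (Submodule.Quotient.mk_eq_zero pFA).mpr this
        rw [hz]
        exact TensorProduct.zero_tmul _ _
    | add a b ha hb => rw [smul_add, ha, hb, add_zero]
  -- the well-defined additive map G₀ : a ⊗ η ↦ (1 ⊗ a) ⊗ C⁻¹ η
  have hGadd : ∀ a b : B ⧸ pB,
      (((TensorProduct.mk Rt (Twist Ft (B ⧸ pB) ⧸ pFA)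
          (KaehlerDifferential (TruncatedWittVector p 2 k) Rt ⧸ pΩ)
        (pFA.mkQ ((1 : Rt) ⊗ₜ[TwistSrc Ft] (a + b)))).toAddMonoidHom).comp c) =
      ((((TensorProduct.mk Rt _ _ (pFA.mkQ ((1 : Rt) ⊗ₜ[TwistSrc Ft] a))).toAddMonoidHom).comp c) +
       (((TensorProduct.mk Rt _ _ (pFA.mkQ ((1 : Rt) ⊗ₜ[TwistSrc Ft] b))).toAddMonoidHom).comp c)) := by
    intro a b
    ext η
    simp only [AddMonoidHom.coe_comp, Function.comp_apply, LinearMap.toAddMonoidHom_coe,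
      TensorProduct.mk_apply, AddMonoidHom.add_apply]
    rw [TensorProduct.tmul_add, map_add, TensorProduct.add_tmul]
  let GF : (B ⧸ pB) →+ (KaehlerDifferential (TruncatedWittVector p 2 k) Rt ⧸ pΩ) →+
      TensorProduct Rt (Twist Ft (B ⧸ pB) ⧸ pFA)
        (KaehlerDifferential (TruncatedWittVector p 2 k) Rt ⧸ pΩ) :=
    AddMonoidHom.mk' (fun a =>
      ((TensorProduct.mk Rt _ _ (pFA.mkQ ((1 : Rt) ⊗ₜ[TwistSrc Ft] a))).toAddMonoidHom).comp c)
      hGadd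
  have hGbal : ∀ (r : Rt) (a : B ⧸ pB)
      (η : KaehlerDifferential (TruncatedWittVector p 2 k) Rt ⧸ pΩ),
      GF (r • a) η = GF a (r • η) := by
    intro r a η
    show (pFA.mkQ ((1 : Rt) ⊗ₜ[TwistSrc Ft] (r • a))) ⊗ₜ[Rt] c η
        = (pFA.mkQ ((1 : Rt) ⊗ₜ[TwistSrc Ft] a)) ⊗ₜ[Rt] c (r • η)
    rw [tw_smul_right, mul_one, hcsemi]
    have h5 : (Ft r) ⊗ₜ[TwistSrc Ft] a = Ft r • ((1 : Rt) ⊗ₜ[TwistSrc Ft] a) := by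
      rw [tw_smul_left, mul_one]
    rw [h5, map_smul, TensorProduct.smul_tmul]
  let G0 := TensorProduct.liftAddHom GF hGbal
  have hG0 : ∀ (a : B ⧸ pB) (η : KaehlerDifferential (TruncatedWittVector p 2 k) Rt ⧸ pΩ),
      G0 (a ⊗ₜ[Rt] η) = (pFA.mkQ ((1 : Rt) ⊗ₜ[TwistSrc Ft] a)) ⊗ₜ[Rt] (c η) := fun a η => rfl
  -- torsion divisibility in F̃^*B ⊗ Ω
  have hΩdiv : ∀ ω : KaehlerDifferential (TruncatedWittVector p 2 k) Rt,
      p • ω = 0 → ∃ v, ω = p • v := by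
    intro ω hω
    have h' : (p : TruncatedWittVector p 2 k) • ω = 0 := by
      rw [Nat.cast_smul_eq_nsmul]; exact hω
    obtain ⟨v, hv⟩ := flat_p_div ((p : TruncatedWittVector p 2 k))
      (witt_p_exact p k) (witt_p_sq p k) _ ω h'
    exact ⟨v, by rw [hv, Nat.cast_smul_eq_nsmul]⟩
  have hMdiv : ∀ m : TensorProduct Rt (Twist Ft B)
      (KaehlerDifferential (TruncatedWittVector p 2 k) Rt),
      p • m = 0 → ∃ v, m = p • v := by
    have bB : Module.Basis (Module.Free.ChooseBasisIndex Rt B) (TwistSrc Ft) B :=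
      Module.Free.chooseBasis Rt B
    have bT : Module.Basis (Module.Free.ChooseBasisIndex Rt B) Rt (Twist Ft B) :=
      Module.Basis.baseChange Rt bB
    have e : TensorProduct Rt (Twist Ft B)
        (KaehlerDifferential (TruncatedWittVector p 2 k) Rt) ≃ₗ[Rt]
        (Module.Free.ChooseBasisIndex Rt B →₀
          KaehlerDifferential (TruncatedWittVector p 2 k) Rt) :=
      (TensorProduct.congr bT.repr
        (LinearEquiv.refl Rt (KaehlerDifferential (TruncatedWittVector p 2 k) Rt))).trans
        (TensorProduct.finsuppScalarLeft Rt
          (KaehlerDifferential (TruncatedWittVector p 2 k) Rt)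
          (Module.Free.ChooseBasisIndex Rt B))
    exact fun m hm => p_div_equiv p e.toAddEquiv (p_div_finsupp p hΩdiv) m hm
  -- the commutator formula
  have hcommH : ∀ ζ : TensorProduct Rt B (KaehlerDifferential (TruncatedWittVector p 2 k) Rt),
      TensorProduct.map Ftd LinearMap.id (H ζ) = H (TensorProduct.map dt LinearMap.id ζ) := by
    intro ζ
    induction ζ using TensorProduct.induction_on with
    | zero => simp
    | tmul b ω =>
        rw [hH, TensorProduct.map_tmul, TensorProduct.map_tmul, hFtd, hH]
        simp
    | add a b ha hb => rw [map_add, map_add, ha, hb, map_add, ← map_add H]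
  have hΘapp : ∀ z : Twist Ft B, Θ z = nt (Ftd z) -
      TensorProduct.map Ftd LinearMap.id (nt z) := fun z => rfl
  have hΘf : ∀ (f : Rt) (x : B), Θ (f ⊗ₜ[TwistSrc Ft] x) =
      f • H (L0 (dt x) - TensorProduct.map dt LinearMap.id (L0 x)) := by
    intro f x
    rw [hΘapp, hFtd, hnt, hnt, map_add, map_smul, TensorProduct.map_tmul, hFtd,
      hcommH, map_sub, smul_sub]
    simp only [LinearMap.id_coe, id_eq]
    abel
  have hHdiv : ∀ ζ : TensorProduct Rt B (KaehlerDifferential (TruncatedWittVector p 2 k) Rt),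
      ∃ u, H ζ = (p : Rt) • u := by
    intro ζ
    induction ζ using TensorProduct.induction_on with
    | zero => exact ⟨0, by simp⟩
    | tmul b ω =>
        obtain ⟨ω', hω'⟩ := hΦdiv ω
        exact ⟨(1 ⊗ₜ[TwistSrc Ft] b) ⊗ₜ[Rt] ω', by rw [hH, hω', TensorProduct.tmul_smul]⟩
    | add a b ha hb =>
        obtain ⟨u, hu⟩ := ha; obtain ⟨v, hv⟩ := hb
        exact ⟨u + v, by rw [map_add, hu, hv, smul_add]⟩
  -- Kodaira–Spencer basics
  have hksapp : ∀ z : B ⧸ pB, ks z = Dconn (dA z) -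
      TensorProduct.map dA LinearMap.id (Dconn z) := fun z => rfl
  have hdA : ∀ b : B, dA (κB b) = κB (dt b) := by
    intro b
    show dA (pB.mkQ b) = pB.mkQ (dt b)
    rw [Submodule.mkQ_apply, Submodule.mkQ_apply, Submodule.mapQ_apply]
  have hks_smul : ∀ (r : Rt) (a : B ⧸ pB), ks (r • a) = r • ks a := by
    intro r a
    rw [hksapp, hksapp, map_smul, hDconn r (dA a), hDconn r a, map_add, map_smul,
      TensorProduct.map_tmul]
    simp only [LinearMap.id_coe, id_eq]
    rw [smul_sub]
    abel
  have hmapcomm : ∀ ζ : TensorProduct Rt B (KaehlerDifferential (TruncatedWittVector p 2 k) Rt),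
      TensorProduct.map κB κΩ (TensorProduct.map dt LinearMap.id ζ) =
      TensorProduct.map dA LinearMap.id (TensorProduct.map κB κΩ ζ) := by
    intro ζ
    induction ζ using TensorProduct.induction_on with
    | zero => simp
    | tmul b ω =>
        rw [TensorProduct.map_tmul, TensorProduct.map_tmul, TensorProduct.map_tmul,
          TensorProduct.map_tmul]
        simp only [LinearMap.id_coe, id_eq]
        rw [← hdA]
    | add a b ha hb => rw [map_add, map_add, ha, hb, map_add, map_add]
  have hδks : ∀ x : B, TensorProduct.map κB κΩ
      (L0 (dt x) - TensorProduct.map dt LinearMap.id (L0 x)) = ks (κB x) := by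
    intro x
    rw [map_sub, hL0 (dt x), hmapcomm, hL0 x, hksapp, ← hdA]
  -- facts about any G with the defining property
  have hGsemi : ∀ G : TensorProduct Rt (B ⧸ pB)
        (KaehlerDifferential (TruncatedWittVector p 2 k) Rt ⧸ pΩ) →+
      TensorProduct Rt (Twist Ft (B ⧸ pB) ⧸ pFA)
        (KaehlerDifferential (TruncatedWittVector p 2 k) Rt ⧸ pΩ),
      (∀ (a : B ⧸ pB) (η : KaehlerDifferential (TruncatedWittVector p 2 k) Rt ⧸ pΩ),
        G (a ⊗ₜ[Rt] η) = (pFA.mkQ ((1 : Rt) ⊗ₜ[TwistSrc Ft] a)) ⊗ₜ[Rt] (c η)) →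
      ∀ (r : Rt) ξ, G (r • ξ) = Ft r • G ξ := by
    intro G hG r ξ
    induction ξ using TensorProduct.induction_on with
    | zero => simp
    | tmul a η =>
        rw [TensorProduct.smul_tmul', hG, hG, tw_smul_right, mul_one]
        have h5 : (Ft r) ⊗ₜ[TwistSrc Ft] a = Ft r • ((1 : Rt) ⊗ₜ[TwistSrc Ft] a) := by
          rw [tw_smul_left, mul_one]
        rw [h5, map_smul, TensorProduct.smul_tmul']
    | add a b ha hb => rw [smul_add, map_add, ha, hb, map_add, smul_add]
  -- the key dividing computation
  have hkey : ∀ G : TensorProduct Rt (B ⧸ pB)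
        (KaehlerDifferential (TruncatedWittVector p 2 k) Rt ⧸ pΩ) →+
      TensorProduct Rt (Twist Ft (B ⧸ pB) ⧸ pFA)
        (KaehlerDifferential (TruncatedWittVector p 2 k) Rt ⧸ pΩ),
      (∀ (a : B ⧸ pB) (η : KaehlerDifferential (TruncatedWittVector p 2 k) Rt ⧸ pΩ),
        G (a ⊗ₜ[Rt] η) = (pFA.mkQ ((1 : Rt) ⊗ₜ[TwistSrc Ft] a)) ⊗ₜ[Rt] (c η)) →
      ∀ (ζ : TensorProduct Rt B (KaehlerDifferential (TruncatedWittVector p 2 k) Rt)) (fr : Rt),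
      ∃ u, fr • H ζ = (p : Rt) • u ∧ ρ u = fr • G (TensorProduct.map κB κΩ ζ) := by
    intro G hG ζ fr
    induction ζ using TensorProduct.induction_on with
    | zero => exact ⟨0, by simp, by simp⟩
    | tmul b ω =>
        obtain ⟨ω', hω'⟩ := hΦdiv ω
        refine ⟨(fr ⊗ₜ[TwistSrc Ft] b) ⊗ₜ[Rt] ω', ?_, ?_⟩
        · rw [hH, hω', TensorProduct.tmul_smul, smul_comm]
          congr 1
          rw [TensorProduct.smul_tmul', tw_smul_left, mul_one]
        · rw [hρ, TensorProduct.map_tmul, hG, hc ω ω' hω', TensorProduct.smul_tmul',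
            ← map_smul, tw_smul_left, mul_one]
    | add z w hz hw =>
        obtain ⟨u, hu1, hu2⟩ := hz
        obtain ⟨v, hv1, hv2⟩ := hw
        refine ⟨u + v, ?_, ?_⟩
        · rw [map_add, smul_add, hu1, hv1, smul_add]
        · rw [map_add, hu2, hv2, map_add, map_add, smul_add]
  refine ⟨?_, ⟨⟨G0, hG0, ?_⟩, ?_⟩, ?_⟩
  -- (i)
  · intro z
    induction z using TensorProduct.induction_on with
    | zero => rw [map_zero]; exact Submodule.zero_mem _
    | tmul f x =>
        obtain ⟨u, hu⟩ := hHdiv (L0 (dt x) - TensorProduct.map dt LinearMap.id (L0 x))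
        have h6 : Θ (f ⊗ₜ[TwistSrc Ft] x) = (p : Rt) • (f • u) := by
          rw [hΘf, hu, smul_comm]
        refine ⟨f • u, ?_⟩
        simp only [LinearMap.smul_apply, LinearMap.id_coe, id_eq]
        rw [h6]
    | add a b ha hb => rw [map_add]; exact Submodule.add_mem _ ha hb
  -- (ii) uniqueness of G
  · intro G' hG'
    refine AddMonoidHom.ext fun ξ => ?_
    induction ξ using TensorProduct.induction_on with
    | zero => rw [map_zero, map_zero]
    | tmul a η => rw [hG', hG0]
    | add a b ha hb => rw [map_add, map_add, ha, hb]
  -- (ii) existence and uniqueness of CK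
  · intro G hG
    let F2 : Rt →+ (B ⧸ pB) →+ TensorProduct Rt (Twist Ft (B ⧸ pB) ⧸ pFA)
        (KaehlerDifferential (TruncatedWittVector p 2 k) Rt ⧸ pΩ) :=
      AddMonoidHom.mk' (fun f => AddMonoidHom.mk' (fun a => f • G (ks a))
          (by intro a b; simp only [map_add, smul_add]))
        (by
          intro f g
          ext a
          simp only [AddMonoidHom.mk'_apply, AddMonoidHom.add_apply]
          rw [add_smul])
    have hF2bal : ∀ (s : TwistSrc Ft) (f : Rt) (a : B ⧸ pB), F2 (s • f) a = F2 f (s • a) := by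
      intro s f a
      show (s • f) • G (ks a) = f • G (ks ((show Rt from s) • a))
      rw [hks_smul, hGsemi G hG]
      have hsf : s • f = Ft (show Rt from s) * f := by rw [Algebra.smul_def]; rfl
      rw [hsf, mul_comm, mul_smul]
    let L' := TensorProduct.liftAddHom F2 hF2bal
    have hL'tmul : ∀ (f : Rt) (a : B ⧸ pB),
        L' (f ⊗ₜ[TwistSrc Ft] a) = f • G (ks a) := fun f a => rfl
    have hL'smul : ∀ (r : Rt) (z : Twist Ft (B ⧸ pB)), L' (r • z) = r • L' z := by
      intro r z
      induction z using TensorProduct.induction_on with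
      | zero => simp
      | tmul f a => rw [tw_smul_left, hL'tmul, hL'tmul, mul_smul]
      | add a b ha hb => rw [smul_add, map_add, ha, hb, map_add, smul_add]
    let L : Twist Ft (B ⧸ pB) →ₗ[Rt] TensorProduct Rt (Twist Ft (B ⧸ pB) ⧸ pFA)
        (KaehlerDifferential (TruncatedWittVector p 2 k) Rt ⧸ pΩ) :=
      { toFun := L', map_add' := fun a b => map_add L' a b, map_smul' := hL'smul }
    have hker : pFA ≤ LinearMap.ker L := by
      rintro _ ⟨w, rfl⟩
      have h7 : ((p : Rt) • (LinearMap.id : Twist Ft (B ⧸ pB) →ₗ[Rt] Twist Ft (B ⧸ pB))) w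
          = (p : Rt) • w := by simp
      rw [LinearMap.mem_ker, h7, map_smul]
      exact hT2tor _
    have hCKQ : ∀ x : B ⧸ pB,
        (pFA.liftQ L hker) (pFA.mkQ ((1 : Rt) ⊗ₜ[TwistSrc Ft] x)) = G (ks x) := by
      intro x
      rw [Submodule.mkQ_apply, Submodule.liftQ_apply]
      show L' ((1 : Rt) ⊗ₜ[TwistSrc Ft] x) = G (ks x)
      rw [hL'tmul, one_smul]
    refine ⟨pFA.liftQ L hker, hCKQ, ?_⟩
    intro CK' hCK'
    apply LinearMap.ext
    intro ξ
    obtain ⟨z, rfl⟩ := Submodule.mkQ_surjective pFA ξ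
    induction z using TensorProduct.induction_on with
    | zero => rw [map_zero, map_zero, map_zero]
    | tmul g a =>
        have hfa : g ⊗ₜ[TwistSrc Ft] a = g • ((1 : Rt) ⊗ₜ[TwistSrc Ft] a) := by
          rw [tw_smul_left, mul_one]
        rw [hfa, map_smul, map_smul, map_smul, hCK' a, hCKQ a]
    | add z w hz hw => rw [map_add, map_add, map_add, hz, hw]
  -- (iii)
  · intro G hG CK hCK f x t ht
    obtain ⟨u, hu1, hu2⟩ := hkey G hG (L0 (dt x) - TensorProduct.map dt LinearMap.id (L0 x)) f
    have hpt : (p : Rt) • t = (p : Rt) • u := by rw [← ht, hΘf, hu1]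
    have hptn : p • (t - u) = 0 := by
      rw [← Nat.cast_smul_eq_nsmul Rt, smul_sub, hpt, sub_self]
    obtain ⟨v, hv⟩ := hMdiv (t - u) hptn
    have hρtu : ρ (t - u) = 0 := by
      rw [hv, AddMonoidHom.map_nsmul, ← Nat.cast_smul_eq_nsmul Rt]
      exact hT2tor _
    have hρt : ρ t = ρ u := by
      have h8 : t = u + (t - u) := by abel
      rw [h8, map_add, hρtu, add_zero]
    rw [hρt, hu2, hδks]
    have hfa : f ⊗ₜ[TwistSrc Ft] (κB x) = f • ((1 : Rt) ⊗ₜ[TwistSrc Ft] (κB x)) := by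
      rw [tw_smul_left, mul_one]
    rw [hfa, map_smul, map_smul, hCK]
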